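/- Let k ≥ 2 and s ≥ 1 be integers and l₁, ..., l_s positive integers. Then there exists an index t with 1 ≤ t ≤ s such that (k−1)·∑_{i=1}^s l_i ≤ k·∑_{i=t}^{s} l_i and ∑_{i=1}^s l_i ≤ k·∑_{i=1}^{t} l_i. -/
import Mathlib


/-- For `k ≥ 2`, `s ≥ 1` and positive integers `l₁, …, l_s`, there is an index `t`
with `1 ≤ t ≤ s` such that `(k-1)·∑_{i=1}^s l_i ≤ k·∑_{i=t}^s l_i` and
`∑_{i=1}^s l_i ≤ k·∑_{i=1}^t l_i`. -/
theorem stmt5 (k s : ℕ) (hk : 2 ≤ k) (hs : 1 ≤ s) (l : ℕ → ℕ)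
    (hl : ∀ i ∈ Finset.Icc 1 s, 0 < l i) :
    ∃ t ∈ Finset.Icc 1 s,
      (k - 1) * ∑ i ∈ Finset.Icc 1 s, l i ≤ k * ∑ i ∈ Finset.Icc t s, l i ∧
      ∑ i ∈ Finset.Icc 1 s, l i ≤ k * ∑ i ∈ Finset.Icc 1 t, l i := by
  classical
  set S := ∑ i ∈ Finset.Icc 1 s, l i with hS
  have hP : ∃ t, 1 ≤ t ∧ t ≤ s ∧ S ≤ k * ∑ i ∈ Finset.Icc 1 t, l i := by
    refine ⟨s, hs, le_refl s, ?_⟩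
    calc S ≤ 2 * S := by omega
    _ ≤ k * S := Nat.mul_le_mul_right S hk
  obtain ⟨ht1, hts, htk⟩ := Nat.find_spec hP
  set t := Nat.find hP with htdef
  refine ⟨t, Finset.mem_Icc.mpr ⟨ht1, hts⟩, ?_, htk⟩
  rcases eq_or_lt_of_le ht1 with h1 | h1
  · -- t = 1
    rw [← h1]
    exact Nat.mul_le_mul_right S (by omega)
  · -- t ≥ 2
    have hmin := Nat.find_min hP (m := t - 1) (by omega)
    push_neg at hmin
    have hlt : k * ∑ i ∈ Finset.Icc 1 (t - 1), l i < S := hmin (by omega) (by omega)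
    have hsplit : (∑ i ∈ Finset.Icc 1 (t - 1), l i) + (∑ i ∈ Finset.Icc t s, l i) = S := by
      rw [hS]
      have e1 : Finset.Icc 1 (t - 1) = Finset.Ioc 0 (t - 1) := by
        ext x; simp [Nat.lt_iff_add_one_le]
      have e2 : Finset.Icc t s = Finset.Ioc (t - 1) s := by
        ext x; simp; omega
      have e3 : Finset.Icc 1 s = Finset.Ioc 0 s := by
        ext x; simp [Nat.lt_iff_add_one_le]
      rw [e1, e2, e3]
      exact Finset.sum_Ioc_consecutive l (by omega) (by omega)
    set A := ∑ i ∈ Finset.Icc 1 (t - 1), l i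
    set B := ∑ i ∈ Finset.Icc t s, l i
    have hkmul : k * A + k * B = k * S := by rw [← Nat.mul_add, hsplit]
    rw [Nat.sub_one_mul]
    omega
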